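/- Suppose a sequence a_R > 0 satisfies: (i) a_R ≤ R^{−η*+o(1)} for some η* > 0, and (ii) a_R · Σ_{v∈Λ_R∩ℤ^d} a_{⌊|v|_∞/2⌋}² ≥ c > 0 for all R ≥ 1, where a_0 := 1. Then η* ≤ d/3. -/

import Mathlib

set_option maxHeartbeats 1000000

open Filter Finset


noncomputable def myBox (d r : ℕ) : Finset (Fin d → ℤ) :=
  Finset.Icc (fun _ : Fin d => -(r:ℤ)) (fun _ : Fin d => (r:ℤ))

noncomputable def TT (a : ℕ → ℝ) (d r : ℕ) : ℝ :=
  ∑ v ∈ myBox d r, (a ((Finset.univ.sup fun i => (v i).natAbs) / 2))^2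

lemma myBox_card (d r : ℕ) : (myBox d r).card = (2*r+1)^d := by
  rw [myBox, Pi.card_Icc]
  simp [Int.card_Icc]
  rw [show (r:ℤ) + 1 + r = ((2*r+1 : ℕ) : ℤ) by push_cast; ring, Int.toNat_natCast]

lemma myBox_subset (d : ℕ) {s r : ℕ} (h : s ≤ r) : myBox d s ⊆ myBox d r := by
  apply Finset.Icc_subset_Icc <;> intro i <;> simp <;> omega

lemma myBox_sup_lower (d : ℕ) {s r : ℕ} {v : Fin d → ℤ}
    (hv : v ∈ myBox d r \ myBox d s) :
    s + 1 ≤ Finset.univ.sup fun i => (v i).natAbs := by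
  rw [Finset.mem_sdiff, myBox, myBox, Finset.mem_Icc, Finset.mem_Icc] at hv
  obtain ⟨_, h2⟩ := hv
  rw [not_and_or] at h2
  have : ∃ i, ¬ (-(s:ℤ) ≤ v i ∧ v i ≤ s) := by
    rcases h2 with h | h <;> [skip; skip] <;>
    · rw [Pi.le_def, not_forall] at h
      obtain ⟨i, hi⟩ := h
      exact ⟨i, by tauto⟩
  obtain ⟨i, hi⟩ := this
  have : s + 1 ≤ (v i).natAbs := by omega
  exact le_trans this (Finset.le_sup (f := fun i => (v i).natAbs) (Finset.mem_univ i))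

lemma TT_nonneg (a : ℕ → ℝ) (d r : ℕ) : 0 ≤ TT a d r :=
  Finset.sum_nonneg fun _ _ => sq_nonneg _

lemma TT_step (a : ℕ → ℝ) (d : ℕ) (β : ℝ) (hβ : 0 < β) (R₀ s r : ℕ)
    (hbound : ∀ k, R₀ ≤ k → (a k)^2 ≤ (k:ℝ)^(-β))
    (hsR : 2*R₀ ≤ s) (hs2 : 2 ≤ s) (hsr : s ≤ r) :
    TT a d r ≤ TT a d s + ((2*r+1)^d : ℝ) * ((s:ℝ)/2)^(-β) := by
  have hsub := myBox_subset d (s := s) (r := r) hsr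
  rw [TT, TT, ← Finset.sum_sdiff hsub]
  rw [add_comm (∑ v ∈ myBox d r \ myBox d s, _)]
  gcongr
  calc ∑ v ∈ myBox d r \ myBox d s, (a ((Finset.univ.sup fun i => (v i).natAbs) / 2))^2
      ≤ (myBox d r \ myBox d s).card • (((s:ℝ)/2)^(-β)) := by
        apply Finset.sum_le_card_nsmul
        intro v hv
        set k := (Finset.univ.sup fun i => (v i).natAbs) / 2 with hk
        have hsup := myBox_sup_lower d hv
        have h2k : s ≤ 2 * k := by
          have h1 : (s+1)/2 ≤ k := Nat.div_le_div_right hsup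
          have h2 := Nat.div_add_mod (s+1) 2
          omega
        have hkR₀ : R₀ ≤ k := by omega
        have hsk : (s:ℝ)/2 ≤ (k:ℝ) := by
          have : (s:ℝ) ≤ 2*(k:ℝ) := by exact_mod_cast Nat.cast_le.mpr h2k
          linarith
        calc (a k)^2 ≤ (k:ℝ)^(-β) := hbound k hkR₀
          _ ≤ ((s:ℝ)/2)^(-β) := by
              apply Real.rpow_le_rpow_of_nonpos _ hsk (by linarith)
              positivity
    _ ≤ ((2*r+1)^d : ℝ) * ((s:ℝ)/2)^(-β) := by
        rw [nsmul_eq_mul]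
        apply mul_le_mul_of_nonneg_right _ (by positivity)
        exact_mod_cast Nat.cast_le.mpr (le_trans (Finset.card_le_card (Finset.sdiff_subset)) (le_of_eq (myBox_card d r)))

/-- Exponent comparison: if `a_R > 0` satisfies `a_R ≤ R^{−η*+o(1)}` and
`a_R · Σ_{v ∈ Λ_R ∩ ℤ^d} a_{⌊|v|_∞/2⌋}² ≥ c > 0` for all `R ≥ 1` (with `a_0 = 1`),
then `η* ≤ d/3`. -/
theorem exponent_comparison (d : ℕ) (hd : 1 ≤ d) (a : ℕ → ℝ) (ha : ∀ R, 0 < a R)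
    (ha0 : a 0 = 1) (η c : ℝ) (hη : 0 < η) (hc : 0 < c)
    (hupper : ∀ ε > (0:ℝ), ∃ R₀ : ℕ, ∀ R ≥ R₀, a R ≤ (R : ℝ) ^ (-η + ε))
    (hlower : ∀ R : ℕ, 1 ≤ R →
      c ≤ a R * ∑ v ∈ Finset.Icc (fun _ : Fin d => -(R:ℤ)) (fun _ : Fin d => (R:ℤ)),
        (a ((Finset.univ.sup fun i => (v i).natAbs) / 2)) ^ 2) :
    η ≤ d / 3 := by

  by_contra hcon
  push_neg at hcon
  have hcon' : (d:ℝ)/3 < η := hcon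
  -- constants
  set δ : ℝ := min η (3*η - d) with hδdef
  have hδ1 : δ ≤ η := min_le_left _ _
  have hδ2 : δ ≤ 3*η - d := min_le_right _ _
  have hδ : 0 < δ := lt_min hη (by linarith)
  set ε : ℝ := δ/6 with hεdef
  have hε : 0 < ε := by positivity
  set β : ℝ := 2*(η - ε) with hβdef
  have hβ : 0 < β := by simp only [hβdef]; nlinarith
  set γ : ℝ := max 0 ((d:ℝ) - β) with hγdef
  have hγ0 : 0 ≤ γ := le_max_left _ _
  have hγβ : (d:ℝ) - β ≤ γ := le_max_right _ _
  have hkey : -η + ε + γ ≤ -δ/2 := by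
    rcases le_total ((d:ℝ) - β) 0 with h | h
    · rw [hγdef, max_eq_left h]; linarith
    · rw [hγdef, max_eq_right h]
      simp only [hβdef]
      linarith
  set L : ℕ := ⌈(2*((d:ℝ)+1))/δ⌉₊ + 1 with hLdef
  have hL1 : 1 ≤ L := by omega
  have hLr : 2*((d:ℝ)+1)/δ ≤ (L:ℝ) := by
    rw [hLdef]
    push_cast
    have := Nat.le_ceil (2*((d:ℝ)+1)/δ)
    linarith
  have hLδ : (L:ℝ)*(-η + ε + γ) + d ≤ -1 := by
    have hL0 : 0 ≤ (L:ℝ) := Nat.cast_nonneg _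
    have h1 : (L:ℝ)*(-η + ε + γ) ≤ (L:ℝ)*(-δ/2) :=
      mul_le_mul_of_nonneg_left hkey hL0
    have h2 : (L:ℝ)*(-δ/2) ≤ -((d:ℝ)+1) := by
      have h4 : 2*((d:ℝ)+1) ≤ (L:ℝ)*δ := (div_le_iff₀ hδ).mp hLr
      nlinarith
    linarith
  -- upper bounds on a
  obtain ⟨R₀, hR₀⟩ := hupper ε hε
  obtain ⟨R₁, hR₁⟩ := hupper η hη
  have hA1 : ∀ k, R₁ ≤ k → a k ≤ 1 := by
    intro k hk
    have := hR₁ k hk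
    simpa using this
  set R₀' : ℕ := max R₀ 1 with hR₀'def
  have hbound : ∀ k, R₀' ≤ k → (a k)^2 ≤ (k:ℝ)^(-β) := by
    intro k hk
    have hk1 : 1 ≤ k := le_trans (le_max_right _ _) hk
    have hk0 : R₀ ≤ k := le_trans (le_max_left _ _) hk
    have h1 : a k ≤ (k:ℝ)^(-η+ε) := hR₀ k hk0
    have h2 : (a k)^2 ≤ ((k:ℝ)^(-η+ε))^2 := pow_le_pow_left₀ (ha k).le h1 2
    have h3 : ((k:ℝ)^(-η+ε))^2 = (k:ℝ)^(-β) := by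
      rw [← Real.rpow_natCast ((k:ℝ)^(-η+ε)) 2, ← Real.rpow_mul (Nat.cast_nonneg k)]
      norm_num
      ring_nf
      congr 1; rw [hβdef]; ring
    linarith
  -- global bound on a
  set M : ℝ := 1 + ∑ k ∈ Finset.range R₁, a k with hMdef
  have hsum0 : 0 ≤ ∑ k ∈ Finset.range R₁, a k :=
    Finset.sum_nonneg fun k _ => (ha k).le
  have hM1 : 1 ≤ M := by rw [hMdef]; linarith
  have hM : ∀ k, a k ≤ M := by
    intro k
    rcases lt_or_ge k R₁ with h | h
    · have := Finset.single_le_sum (f := a) (fun i _ => (ha i).le) (Finset.mem_range.mpr h)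
      rw [hMdef]; linarith
    · have := hA1 k h; linarith
  set C₁ : ℝ := 3^d * ((2:ℝ)^β + M^2) with hC₁def
  have hC₁ : 0 < C₁ := by
    apply mul_pos (by positivity)
    have : (0:ℝ) < (2:ℝ)^β := Real.rpow_pos_of_pos (by norm_num) β
    nlinarith
  -- the chain bound
  have chain : ∀ q : ℕ, 2*R₀' ≤ q → 2 ≤ q → ∀ j, 1 ≤ j → j ≤ L →
      TT a d (q^j) ≤ (j:ℝ) * C₁ * (q:ℝ)^((d:ℝ) + (L:ℝ)*γ) := by
    intro q hq1 hq2
    have hQ1 : (1:ℝ) ≤ (q:ℝ) := by exact_mod_cast le_trans (by norm_num) hq2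
    have hQ0 : (0:ℝ) < (q:ℝ) := by linarith
    have hexp0 : (0:ℝ) ≤ (L:ℝ)*γ := mul_nonneg (Nat.cast_nonneg _) hγ0
    intro j
    induction j with
    | zero => intro h; omega
    | succ j ih =>
      intro _ hjL
      rcases Nat.eq_zero_or_pos j with rfl | hj
      · -- base case j+1 = 1
        simp only [zero_add, pow_one]
        have hcard : TT a d q ≤ ((2*q+1)^d : ℕ) • M^2 := by
          rw [TT, ← myBox_card]
          apply Finset.sum_le_card_nsmul
          intro v _
          exact pow_le_pow_left₀ (ha _).le (hM _) 2
        have h1 : (((2*q+1)^d : ℕ) : ℝ) ≤ 3^d * (q:ℝ)^(d:ℕ) := by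
          have : ((2*q+1)^d : ℕ) ≤ (3*q)^d := Nat.pow_le_pow_left (by omega) d
          calc (((2*q+1)^d : ℕ) : ℝ) ≤ (((3*q)^d : ℕ) : ℝ) := by exact_mod_cast this
            _ = 3^d * (q:ℝ)^(d:ℕ) := by push_cast [mul_pow]; ring
        have h2 : (q:ℝ)^(d:ℕ) ≤ (q:ℝ)^((d:ℝ) + (L:ℝ)*γ) := by
          rw [← Real.rpow_natCast (q:ℝ) d]
          exact Real.rpow_le_rpow_of_exponent_le hQ1 (by linarith)
        have hM2 : M^2 ≤ (2:ℝ)^β + M^2 := by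
          have : (0:ℝ) < (2:ℝ)^β := Real.rpow_pos_of_pos (by norm_num) β
          linarith
        rw [nsmul_eq_mul] at hcard
        calc TT a d q ≤ (((2*q+1)^d : ℕ) : ℝ) * M^2 := hcard
          _ ≤ (3^d * (q:ℝ)^((d:ℝ) + (L:ℝ)*γ)) * ((2:ℝ)^β + M^2) := by
              apply mul_le_mul
              · exact le_trans h1 (by nlinarith [pow_pos (show (0:ℝ) < 3 by norm_num) d,
                  Real.rpow_pos_of_pos hQ0 ((d:ℝ) + (L:ℝ)*γ)])
              · exact hM2
              · positivity
              · positivity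
          _ = (1:ℝ) * C₁ * (q:ℝ)^((d:ℝ) + (L:ℝ)*γ) := by rw [hC₁def]; ring
          _ = ((0+1 : ℕ):ℝ) * C₁ * (q:ℝ)^((d:ℝ) + (L:ℝ)*γ) := by norm_num
      · -- inductive step
        have hjL' : j ≤ L := by omega
        have ihj := ih hj hjL'
        have hqj2 : 2 ≤ q^j := le_trans hq2 (Nat.le_self_pow (by omega) q)
        have hqjR : 2*R₀' ≤ q^j := le_trans hq1 (Nat.le_self_pow (by omega) q)
        have hqq : q^j ≤ q^(j+1) := Nat.pow_le_pow_right (by omega) (by omega)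
        have hstep := TT_step a d β hβ R₀' (q^j) (q^(j+1)) hbound hqjR hqj2 hqq
        -- bound the error term
        set A : ℝ := (q:ℝ)^((((j:ℝ)+1))*(d:ℝ)) with hA
        set B : ℝ := (q:ℝ)^((j:ℝ)*(-β)) with hB
        have hQj : (0:ℝ) < (q:ℝ)^j := pow_pos hQ0 j
        have hAeq : A = ((q:ℝ)^(j+1))^d := by
          rw [hA, ← Real.rpow_natCast (q:ℝ) (j+1),
            ← Real.rpow_natCast ((q:ℝ)^(((j+1:ℕ)):ℝ)) d,
            ← Real.rpow_mul (le_of_lt hQ0)]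
          congr 1
          push_cast
          ring
        have hBeq : ((q:ℝ)^j)^(-β) = B := by
          rw [hB, ← Real.rpow_natCast (q:ℝ) j, ← Real.rpow_mul (le_of_lt hQ0)]
        have e1 : ((2*((q^(j+1):ℕ):ℝ)+1)^d) ≤ 3^d * A := by
          have h : ((2*q^(j+1)+1)^d : ℕ) ≤ (3*q^(j+1))^d := by
            apply Nat.pow_le_pow_left
            have h1 : 1 ≤ q^(j+1) := Nat.one_le_pow _ _ (by omega)
            omega
          calc ((2*((q^(j+1):ℕ):ℝ)+1)^d) = (((2*q^(j+1)+1)^d : ℕ) : ℝ) := by push_cast; ring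
            _ ≤ (((3*q^(j+1))^d : ℕ) : ℝ) := by exact_mod_cast h
            _ = 3^d * A := by rw [hAeq]; push_cast [mul_pow]; ring
        have e2 : (((q^j : ℕ):ℝ)/2)^(-β) = (2:ℝ)^β * B := by
          rw [← hBeq]
          push_cast
          rw [Real.div_rpow (le_of_lt hQj) (by norm_num : (0:ℝ) ≤ 2),
            Real.rpow_neg (by norm_num : (0:ℝ) ≤ 2)]
          field_simp
        have hAB : A * B = (q:ℝ)^(((((j:ℝ)+1))*(d:ℝ)) + (j:ℝ)*(-β)) :=
          (Real.rpow_add hQ0 _ _).symm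
        have e4 : (q:ℝ)^(((((j:ℝ)+1))*(d:ℝ)) + (j:ℝ)*(-β)) ≤ (q:ℝ)^((d:ℝ) + (L:ℝ)*γ) := by
          apply Real.rpow_le_rpow_of_exponent_le hQ1
          have hj0 : (0:ℝ) ≤ (j:ℝ) := Nat.cast_nonneg _
          have hjLc : (j:ℝ) ≤ (L:ℝ) := by exact_mod_cast hjL'
          have h5 := mul_le_mul_of_nonneg_left hγβ hj0
          have h2 : (j:ℝ)*γ ≤ (L:ℝ)*γ := mul_le_mul_of_nonneg_right hjLc hγ0
          nlinarith
        have e5 : (3:ℝ)^d * (2:ℝ)^β ≤ C₁ := by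
          rw [hC₁def]
          have h6 : (0:ℝ) ≤ M^2 := sq_nonneg _
          nlinarith [pow_pos (show (0:ℝ) < 3 by norm_num) d]
        have herr : ((2*((q^(j+1):ℕ):ℝ)+1)^d) * (((q^j : ℕ):ℝ)/2)^(-β)
            ≤ C₁ * (q:ℝ)^((d:ℝ) + (L:ℝ)*γ) := by
          rw [e2]
          have hB0 : 0 ≤ B := le_of_lt (Real.rpow_pos_of_pos hQ0 _)
          have h2β : (0:ℝ) < (2:ℝ)^β := Real.rpow_pos_of_pos (by norm_num) β
          calc ((2*((q^(j+1):ℕ):ℝ)+1)^d) * ((2:ℝ)^β * B)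
              ≤ (3^d * A) * ((2:ℝ)^β * B) := by
                apply mul_le_mul_of_nonneg_right e1
                positivity
            _ = (3^d * (2:ℝ)^β) * (A * B) := by ring
            _ = (3^d * (2:ℝ)^β) * (q:ℝ)^(((((j:ℝ)+1))*(d:ℝ)) + (j:ℝ)*(-β)) := by rw [hAB]
            _ ≤ C₁ * (q:ℝ)^((d:ℝ) + (L:ℝ)*γ) := by
                apply mul_le_mul e5 e4 (le_of_lt (Real.rpow_pos_of_pos hQ0 _)) (le_of_lt hC₁)
        calc TT a d (q^(j+1))
            ≤ TT a d (q^j) + ((2*((q^(j+1)):ℕ)+1)^d : ℝ) * (((q^j : ℕ):ℝ)/2)^(-β) := hstep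
          _ ≤ (j:ℝ) * C₁ * (q:ℝ)^((d:ℝ) + (L:ℝ)*γ) + C₁ * (q:ℝ)^((d:ℝ) + (L:ℝ)*γ) := by
              apply add_le_add ihj
              calc ((2*((q^(j+1)):ℕ)+1)^d : ℝ) * (((q^j : ℕ):ℝ)/2)^(-β)
                  = ((2*((q^(j+1):ℕ):ℝ)+1)^d) * (((q^j : ℕ):ℝ)/2)^(-β) := by push_cast; ring
                _ ≤ C₁ * (q:ℝ)^((d:ℝ) + (L:ℝ)*γ) := herr
          _ = ((j+1 : ℕ):ℝ) * C₁ * (q:ℝ)^((d:ℝ) + (L:ℝ)*γ) := by push_cast; ring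
  -- final contradiction
  set q : ℕ := max (2*R₀' + 2) (⌈(L:ℝ)*C₁/c⌉₊ + 2) with hqdef
  have hq1 : 2*R₀' ≤ q := le_trans (by omega) (le_max_left _ _)
  have hq2 : 2 ≤ q := le_trans (by omega) (le_max_left _ _)
  have hQ1 : (1:ℝ) ≤ (q:ℝ) := by exact_mod_cast le_trans (by norm_num) hq2
  have hQ0 : (0:ℝ) < (q:ℝ) := by linarith
  have hqbig : (L:ℝ)*C₁/c < (q:ℝ) := by
    have h1 : (⌈(L:ℝ)*C₁/c⌉₊ + 2 : ℕ) ≤ q := le_max_right _ _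
    have h2 := Nat.le_ceil ((L:ℝ)*C₁/c)
    have h3 : ((⌈(L:ℝ)*C₁/c⌉₊ + 2 : ℕ) : ℝ) ≤ (q:ℝ) := Nat.cast_le.mpr h1
    rw [Nat.cast_add, Nat.cast_ofNat] at h3
    linarith
  have hqL1 : 1 ≤ q^L := Nat.one_le_pow _ _ (by omega)
  have hTbd := chain q hq1 hq2 L hL1 (le_refl L)
  have haq : a (q^L) ≤ ((q:ℝ)^L)^(-η+ε) := by
    have hge : R₀ ≤ q^L := by
      have : R₀' ≤ q := by omega
      have h2 : q ≤ q^L := Nat.le_self_pow (by omega) q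
      have : R₀ ≤ R₀' := le_max_left _ _
      omega
    have h7 := hR₀ (q^L) hge
    have hcastq : ((q^L : ℕ):ℝ) = (q:ℝ)^L := by push_cast; ring
    rw [hcastq] at h7
    exact h7
  have key := hlower (q^L) hqL1
  have hTT : TT a d (q^L) = ∑ v ∈ Finset.Icc (fun _ : Fin d => -((q^L : ℕ):ℤ)) (fun _ : Fin d => ((q^L : ℕ):ℤ)),
      (a ((Finset.univ.sup fun i => (v i).natAbs) / 2)) ^ 2 := rfl
  rw [← hTT] at key
  have hfin : a (q^L) * TT a d (q^L) ≤ (L:ℝ)*C₁ * (q:ℝ)^(-(1:ℝ)) := by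
    have h1 : a (q^L) * TT a d (q^L) ≤ ((q:ℝ)^L)^(-η+ε) * ((L:ℝ) * C₁ * (q:ℝ)^((d:ℝ) + (L:ℝ)*γ)) :=
      mul_le_mul haq hTbd (TT_nonneg a d _) (by positivity)
    have h2 : ((q:ℝ)^L)^(-η+ε) * ((L:ℝ) * C₁ * (q:ℝ)^((d:ℝ) + (L:ℝ)*γ))
        = (L:ℝ)*C₁ * (q:ℝ)^((L:ℝ)*(-η+ε) + ((d:ℝ) + (L:ℝ)*γ)) := by
      calc ((q:ℝ)^L)^(-η+ε) * ((L:ℝ) * C₁ * (q:ℝ)^((d:ℝ) + (L:ℝ)*γ))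
          = (q:ℝ)^((L:ℝ)*(-η+ε)) * ((L:ℝ) * C₁ * (q:ℝ)^((d:ℝ) + (L:ℝ)*γ)) := by
            rw [← Real.rpow_natCast (q:ℝ) L, ← Real.rpow_mul (le_of_lt hQ0)]
        _ = (L:ℝ)*C₁ * ((q:ℝ)^((L:ℝ)*(-η+ε)) * (q:ℝ)^((d:ℝ) + (L:ℝ)*γ)) := by ring
        _ = (L:ℝ)*C₁ * (q:ℝ)^((L:ℝ)*(-η+ε) + ((d:ℝ) + (L:ℝ)*γ)) := by
            rw [← Real.rpow_add hQ0]
    have h3 : (q:ℝ)^((L:ℝ)*(-η+ε) + ((d:ℝ) + (L:ℝ)*γ)) ≤ (q:ℝ)^(-(1:ℝ)) := by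
      apply Real.rpow_le_rpow_of_exponent_le hQ1
      nlinarith
    calc a (q^L) * TT a d (q^L) ≤ (L:ℝ)*C₁ * (q:ℝ)^((L:ℝ)*(-η+ε) + ((d:ℝ) + (L:ℝ)*γ)) := by
          rw [← h2]; exact h1
      _ ≤ (L:ℝ)*C₁ * (q:ℝ)^(-(1:ℝ)) := by
          apply mul_le_mul_of_nonneg_left h3
          positivity
  have hfin2 : (L:ℝ)*C₁ * (q:ℝ)^(-(1:ℝ)) < c := by
    rw [Real.rpow_neg_one]
    rw [div_lt_iff₀ hc] at hqbig
    rw [mul_inv_lt_iff₀ hQ0]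
    linarith
  linarith
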